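/- In the algebra of pseudo-differential operators A = Σ_{n ≤ m} a_n ∂_x^n with coefficients a_n in a differential ring (R, ∂), the composition defined by ∂_x^k ∘ f = Σ_{l ≥ 0} (k(k−1)⋯(k−l+1)/l!) · (∂^l f) · ∂_x^{k−l} for k ∈ ℤ, extended bilinearly and continuously, is associative. -/

import Mathlib

open Finset

/-- The generalized binomial coefficient `k(k−1)⋯(k−l+1)/l!` for `k : ℤ`. -/
def genBinom (k : ℤ) (l : ℕ) : ℚ :=
  (∏ i ∈ Finset.range l, ((k : ℚ) - (i : ℚ))) / (Nat.factorial l : ℚ)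

/-- A pseudo-differential operator `Σ_{n ≤ bound} a_n ∂ₓ^n` with coefficients in `R`:
a family of coefficients `a_n` indexed by `n : ℤ`, vanishing above some bound. -/
structure PDO (R : Type*) [CommRing R] where
  coeff : ℤ → R
  bound : ℤ
  coeff_eq_zero : ∀ n : ℤ, bound < n → coeff n = 0

variable {R : Type*} [CommRing R] [Algebra ℚ R]

/-- The coefficient of `∂ₓ^n` in the composition `A ∘ B`, determined by the generalized
Leibniz rule `∂ₓ^k ∘ f = Σ_{l ≥ 0} (k(k−1)⋯(k−l+1)/l!)(∂^l f) ∂ₓ^{k−l}` together with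
bilinearity and continuity: the terms `a_k · (k…(k−l+1)/l!) ∂^l(b_j)` with
`k − l + j = n` are parametrized by `k = n − B.bound + p` and `l ≤ p`. -/
def pdoCompCoeff (D : Derivation ℚ R R) (A B : PDO R) (n : ℤ) : R :=
  ∑ p ∈ Finset.range (A.bound + B.bound + 1 - n).toNat,
    ∑ l ∈ Finset.range (p + 1),
      A.coeff (n - B.bound + p) *
        (genBinom (n - B.bound + p) l • (⇑D)^[l] (B.coeff (B.bound - p + l)))

/-- Composition of pseudo-differential operators. -/
def pdoComp (D : Derivation ℚ R R) (A B : PDO R) : PDO R where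
  coeff := pdoCompCoeff D A B
  bound := A.bound + B.bound
  coeff_eq_zero := by
    intro n hn
    have h : (A.bound + B.bound + 1 - n).toNat = 0 := by omega
    simp [pdoCompCoeff, h]

/-- The pseudo-differential operator `∂ₓ^k`. -/
def pdoDelta (k : ℤ) : PDO R where
  coeff := fun n => if n = k then 1 else 0
  bound := k
  coeff_eq_zero := by
    intro n hn
    try dsimp only
    rw [if_neg (by omega)]

/-- The identity pseudo-differential operator `1 = ∂ₓ^0`. -/
def pdoOne : PDO R := pdoDelta 0

/-- Iterated composition power `A^n` of a pseudo-differential operator. -/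
def pdoNpow (D : Derivation ℚ R R) (A : PDO R) : ℕ → PDO R
  | 0 => pdoOne
  | n + 1 => pdoComp D A (pdoNpow D A n)

/-- The differential-operator part `A₊ = Σ_{n ≥ 0} a_n ∂ₓ^n`. -/
def pdoPlus (A : PDO R) : PDO R where
  coeff := fun n => if 0 ≤ n then A.coeff n else 0
  bound := max A.bound 0
  coeff_eq_zero := by
    intro n hn
    try dsimp only
    by_cases h : 0 ≤ n
    · rw [if_pos h]; exact A.coeff_eq_zero n (by omega)
    · rw [if_neg h]

/-- The purely negative part `A₋ = A − A₊ = Σ_{n ≤ −1} a_n ∂ₓ^n`. -/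
def pdoMinus (A : PDO R) : PDO R where
  coeff := fun n => if n < 0 then A.coeff n else 0
  bound := -1
  coeff_eq_zero := by
    intro n hn
    try dsimp only
    rw [if_neg (by omega)]


section AuxLemmas

open Polynomial

lemma descPochhammer_smeval_rat (x : ℚ) : ∀ l : ℕ,
    (descPochhammer ℤ l).smeval x = ∏ i ∈ Finset.range l, (x - (i : ℚ))
  | 0 => by simp [descPochhammer_zero]
  | l + 1 => by
    rw [descPochhammer_succ_right, smeval_mul, descPochhammer_smeval_rat x l,
      Finset.prod_range_succ, smeval_sub, smeval_X, smeval_natCast]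
    simp
lemma genBinom_eq_choose (k : ℤ) (l : ℕ) : genBinom k l = Ring.choose ((k : ℚ)) l := by
  have h := Ring.descPochhammer_eq_factorial_smul_choose (R := ℚ) (k : ℚ) l
  rw [descPochhammer_smeval_rat] at h
  rw [genBinom, h, nsmul_eq_mul]
  field_simp

lemma genBinom_mul (k : ℤ) (s u : ℕ) :
    genBinom k s * genBinom (k - s) u = (Nat.choose (s + u) s : ℚ) * genBinom k (s + u) := by
  have h := Ring.choose_smul_choose (R := ℚ) (k : ℚ) (Nat.le_add_right s u)
  rw [nsmul_eq_mul] at h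
  rw [Nat.add_sub_cancel_left] at h
  have hc : ((k - (s:ℤ) : ℤ) : ℚ) = (k : ℚ) - (s : ℕ) := by push_cast; ring
  rw [genBinom_eq_choose, genBinom_eq_choose, genBinom_eq_choose, hc, ← h]

lemma genBinom_add (a b : ℤ) (l : ℕ) :
    genBinom (a + b) l = ∑ u ∈ Finset.range (l + 1), genBinom a u * genBinom b (l - u) := by
  have h := Ring.add_choose_eq (R := ℚ) (r := (a : ℚ)) (s := (b : ℚ)) l (Commute.all _ _)
  rw [Finset.Nat.sum_antidiagonal_eq_sum_range_succ_mk] at h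
  simp only [genBinom_eq_choose]
  push_cast at h ⊢
  convert h using 2

lemma sum_triangle {M : Type*} [AddCommMonoid M] (N : ℕ) (f : ℕ → ℕ → M) :
    ∑ l ∈ range N, ∑ s ∈ range (l + 1), f s (l - s)
      = ∑ s ∈ range N, ∑ u ∈ range (N - s), f s u := by
  induction N with
  | zero => simp
  | succ N ih =>
    rw [sum_range_succ, ih, sum_range_succ (fun s => ∑ u ∈ range (N + 1 - s), f s u),
      sum_range_succ (fun s => f s (N - s))]
    have h1 : ∀ s ∈ range N, (∑ u ∈ range (N + 1 - s), f s u)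
        = ∑ u ∈ range (N - s), f s u + f s (N - s) := by
      intro s hs
      have hNs : N + 1 - s = (N - s) + 1 := by have := mem_range.mp hs; omega
      rw [hNs, sum_range_succ]
    rw [sum_congr rfl h1, sum_add_distrib]
    have h2 : N + 1 - N = 1 := by omega
    rw [h2, sum_range_one, Nat.sub_self]
    abel

lemma core_identity {M : Type*} [AddCommMonoid M] [Module ℚ M] (N : ℕ) (k j : ℤ)
    (X : ℕ → ℕ → M) (hX : ∀ l1 l2 : ℕ, N ≤ l1 + l2 → X l1 l2 = 0) :
    ∑ l ∈ range N, ∑ s ∈ range (l + 1), ∑ l3 ∈ range N,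
        (genBinom k l * (l.choose s : ℚ) * genBinom j l3) • X s (l3 + (l - s))
      = ∑ l1 ∈ range N, ∑ l2 ∈ range N,
          (genBinom k l1 * genBinom (k - l1 + j) l2) • X l1 l2 := by
  classical
  set F : ℕ → ℕ → M := fun s u =>
    ∑ l3 ∈ range N, (genBinom k s * genBinom (k - s) u * genBinom j l3) • X s (l3 + u) with hF
  have hFzero : ∀ s u : ℕ, N ≤ s + u → F s u = 0 := by
    intro s u hsu
    apply Finset.sum_eq_zero
    intro l3 _
    rw [hX s (l3 + u) (by omega), smul_zero]
  -- LHS to triangle form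
  have hL : ∑ l ∈ range N, ∑ s ∈ range (l + 1), ∑ l3 ∈ range N,
      (genBinom k l * (l.choose s : ℚ) * genBinom j l3) • X s (l3 + (l - s))
      = ∑ l ∈ range N, ∑ s ∈ range (l + 1), F s (l - s) := by
    refine sum_congr rfl fun l _ => sum_congr rfl fun s hs => sum_congr rfl fun l3 _ => ?_
    have hsl : s ≤ l := by have := mem_range.mp hs; omega
    have hmul : genBinom k l * (l.choose s : ℚ)
        = genBinom k s * genBinom (k - s) (l - s) := by
      have := genBinom_mul k s (l - s)
      rw [Nat.add_sub_cancel' hsl] at this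
      rw [this, mul_comm]
    rw [hmul]
  -- extend ranges
  have hext : ∀ s ∈ range N, ∑ u ∈ range (N - s), F s u = ∑ u ∈ range N, F s u := by
    intro s hs
    apply Finset.sum_subset (Finset.range_subset_range.mpr (Nat.sub_le N s))
    intro u _ hu
    simp only [Finset.mem_range, not_lt] at hu
    exact hFzero s u (by have := mem_range.mp hs; omega)
  rw [hL, sum_triangle N F, sum_congr rfl hext]
  -- RHS
  have hR : ∀ l1 ∈ range N, ∑ l2 ∈ range N,
      (genBinom k l1 * genBinom (k - l1 + j) l2) • X l1 l2 = ∑ u ∈ range N, F l1 u := by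
    intro l1 hl1
    have step1 : ∀ l2 ∈ range N, (genBinom k l1 * genBinom (k - l1 + j) l2) • X l1 l2
        = ∑ u ∈ range (l2 + 1),
            (genBinom k l1 * genBinom (k - l1) u * genBinom j (l2 - u)) • X l1 l2 := by
      intro l2 _
      rw [genBinom_add (k - l1) j l2, mul_sum, sum_smul]
      refine sum_congr rfl fun u _ => ?_
      rw [mul_assoc]
    rw [sum_congr rfl step1]
    have step2 : ∀ l2 ∈ range N, ∑ u ∈ range (l2 + 1),
        (genBinom k l1 * genBinom (k - l1) u * genBinom j (l2 - u)) • X l1 l2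
        = ∑ u ∈ range (l2 + 1),
            (fun u l3 => (genBinom k l1 * genBinom (k - l1) u * genBinom j l3) • X l1 (l3 + u))
              u (l2 - u) := by
      intro l2 _
      refine sum_congr rfl fun u hu => ?_
      have : l2 - u + u = l2 := by have := mem_range.mp hu; omega
      simp only [this]
    rw [sum_congr rfl step2, sum_triangle N (fun u l3 => (genBinom k l1 * genBinom (k - l1) u * genBinom j l3) • X l1 (l3 + u))]
    refine sum_congr rfl fun u hu => ?_
    have : ∑ l3 ∈ range (N - u), (genBinom k l1 * genBinom (k - l1) u * genBinom j l3) • X l1 (l3 + u)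
        = ∑ l3 ∈ range N, (genBinom k l1 * genBinom (k - l1) u * genBinom j l3) • X l1 (l3 + u) := by
      apply Finset.sum_subset (Finset.range_subset_range.mpr (Nat.sub_le N u))
      intro l3 _ hl3
      simp only [Finset.mem_range, not_lt] at hl3
      rw [hX l1 (l3 + u) (by omega), smul_zero]
    rw [this, hF]
  rw [sum_congr rfl hR]

variable {R : Type*} [CommRing R] [Algebra ℚ R]

lemma iter_zero (D : Derivation ℚ R R) (l : ℕ) : (⇑D)^[l] 0 = 0 :=
  Function.iterate_fixed (map_zero D) l

lemma iter_smul (D : Derivation ℚ R R) (q : ℚ) (x : R) : ∀ l : ℕ,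
    (⇑D)^[l] (q • x) = q • (⇑D)^[l] x
  | 0 => rfl
  | l + 1 => by
    rw [Function.iterate_succ_apply', Function.iterate_succ_apply', iter_smul D q x l, Derivation.map_smul]

lemma iter_sum {ι : Type*} (D : Derivation ℚ R R) (s : Finset ι) (f : ι → R) (l : ℕ) :
    (⇑D)^[l] (∑ i ∈ s, f i) = ∑ i ∈ s, (⇑D)^[l] (f i) := by
  induction l with
  | zero => rfl
  | succ l ih => rw [Function.iterate_succ_apply', ih, map_sum]; simp [Function.iterate_succ_apply']

lemma iter_leibniz (D : Derivation ℚ R R) (x y : R) : ∀ l : ℕ,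
    (⇑D)^[l] (x * y) =
      ∑ s ∈ range (l + 1), (l.choose s : ℚ) • ((⇑D)^[s] x * (⇑D)^[l - s] y)
  | 0 => by simp
  | l + 1 => by
    rw [Function.iterate_succ_apply', iter_leibniz D x y l, map_sum]
    have step : ∀ s ∈ range (l + 1),
        D ((l.choose s : ℚ) • ((⇑D)^[s] x * (⇑D)^[l - s] y)) =
          (l.choose s : ℚ) • ((⇑D)^[s + 1] x * (⇑D)^[l - s] y)
          + (l.choose s : ℚ) • ((⇑D)^[s] x * (⇑D)^[l - s + 1] y) := by
      intro s _
      rw [Derivation.map_smul, Derivation.leibniz, smul_eq_mul, smul_eq_mul, smul_add,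
        Function.iterate_succ_apply' D s x, Function.iterate_succ_apply' D (l - s) y,
        mul_comm ((⇑D)^[l - s] y) (D ((⇑D)^[s] x))]
      exact add_comm _ _
    rw [sum_congr rfl step, sum_add_distrib]
    have e1 : ∀ s ∈ range (l + 1),
        (l.choose s : ℚ) • ((⇑D)^[s + 1] x * (⇑D)^[l - s] y)
          = (l.choose s : ℚ) • ((⇑D)^[s + 1] x * (⇑D)^[l + 1 - (s + 1)] y) := by
      intro s hs
      have : l - s = l + 1 - (s + 1) := by omega
      rw [this]
    have e2 : ∀ s ∈ range (l + 1),
        (l.choose s : ℚ) • ((⇑D)^[s] x * (⇑D)^[l - s + 1] y)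
          = (l.choose s : ℚ) • ((⇑D)^[s] x * (⇑D)^[l + 1 - s] y) := by
      intro s hs
      have : l - s + 1 = l + 1 - s := by have := mem_range.mp hs; omega
      rw [this]
    rw [sum_congr rfl e1, sum_congr rfl e2]
    rw [Finset.sum_range_succ' (fun s => ((l+1).choose s : ℚ) • ((⇑D)^[s] x * (⇑D)^[l + 1 - s] y))]
    rw [Finset.sum_range_succ' (fun s => (l.choose s : ℚ) • ((⇑D)^[s] x * (⇑D)^[l + 1 - s] y))]
    have e3 : ∀ s ∈ range l,
        (l.choose (s+1) : ℚ) • ((⇑D)^[s+1] x * (⇑D)^[l + 1 - (s+1)] y)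
          = (fun s => (l.choose (s+1) : ℚ) • ((⇑D)^[s+1] x * (⇑D)^[l + 1 - (s+1)] y)) s := by
      intro s _; rfl
    have e4 : ∑ s ∈ range l, (l.choose (s+1) : ℚ) • ((⇑D)^[s+1] x * (⇑D)^[l + 1 - (s+1)] y)
        = ∑ s ∈ range (l+1), (l.choose (s+1) : ℚ) • ((⇑D)^[s+1] x * (⇑D)^[l + 1 - (s+1)] y) := by
      rw [Finset.sum_range_succ]
      simp
    rw [e4]
    simp only [Nat.choose_succ_succ, Nat.cast_add, add_smul, sum_add_distrib, Nat.choose_zero_right,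
      Nat.cast_one, one_smul]
    abel

lemma sum_eq_sum_of_vanish {ι M : Type*} [AddCommMonoid M] [DecidableEq ι] (f : ι → M)
    (T1 T2 : Finset ι) (h : ∀ x, x ∉ T1 ∨ x ∉ T2 → f x = 0) :
    ∑ x ∈ T1, f x = ∑ x ∈ T2, f x := by
  have h1 : ∑ x ∈ T1 ∩ T2, f x = ∑ x ∈ T1, f x :=
    Finset.sum_subset Finset.inter_subset_left
      (fun x hx1 hx => h x (Or.inr fun hx2 => hx (Finset.mem_inter.mpr ⟨hx1, hx2⟩)))
  have h2 : ∑ x ∈ T1 ∩ T2, f x = ∑ x ∈ T2, f x :=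
    Finset.sum_subset Finset.inter_subset_right
      (fun x hx2 hx => h x (Or.inl fun hx1 => hx (Finset.mem_inter.mpr ⟨hx1, hx2⟩)))
  rw [← h1, h2]

lemma sum_Icc_shift {M : Type*} [AddCommMonoid M] (f : ℤ → M) (a b c : ℤ) :
    ∑ j ∈ Finset.Icc (a - c) (b - c), f (c + j) = ∑ m ∈ Finset.Icc a b, f m := by
  have h : Finset.Icc a b = (Finset.Icc (a - c) (b - c)).map (addLeftEmbedding c) := by
    rw [Finset.map_add_left_Icc]
    congr 1 <;> ring
  rw [h, Finset.sum_map]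
  refine Finset.sum_congr rfl fun j _ => ?_
  congr 1


end AuxLemmas

section CompLemmas

variable {R : Type*} [CommRing R] [Algebra ℚ R]

/-- The general term of the composition sum. -/
def cTerm (D : Derivation ℚ R R) (A B : PDO R) (n : ℤ) (q : ℤ × ℕ) : R :=
  A.coeff q.1 * (genBinom q.1 q.2 • (⇑D)^[q.2] (B.coeff (n - q.1 + q.2)))

lemma cTerm_eq_zero {D : Derivation ℚ R R} {A B : PDO R} {n : ℤ} {q : ℤ × ℕ}
    (h : ¬ (q.1 ≤ A.bound ∧ (q.2 : ℤ) ≤ q.1 + B.bound - n)) :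
    cTerm D A B n q = 0 := by
  rcases not_and_or.mp h with h | h
  · rw [cTerm, A.coeff_eq_zero _ (by omega), zero_mul]
  · rw [cTerm, B.coeff_eq_zero _ (by omega), iter_zero, smul_zero, mul_zero]

lemma pdoCompCoeff_eq (D : Derivation ℚ R R) (A B : PDO R) (n : ℤ) (T : Finset (ℤ × ℕ))
    (hT : ∀ q : ℤ × ℕ, q.1 ≤ A.bound → (q.2 : ℤ) ≤ q.1 + B.bound - n → q ∈ T) :
    pdoCompCoeff D A B n = ∑ q ∈ T, cTerm D A B n q := by
  classical
  set P := (A.bound + B.bound + 1 - n).toNat with hP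
  have step1 : ∀ p ∈ Finset.range P,
      ∑ l ∈ Finset.range (p + 1), A.coeff (n - B.bound + p) *
          (genBinom (n - B.bound + p) l • (⇑D)^[l] (B.coeff (B.bound - p + l)))
        = ∑ l ∈ Finset.range P, cTerm D A B n (n - B.bound + p, l) := by
    intro p hp
    have he : ∀ l ∈ Finset.range (p + 1),
        A.coeff (n - B.bound + p) *
            (genBinom (n - B.bound + p) l • (⇑D)^[l] (B.coeff (B.bound - p + l)))
          = cTerm D A B n (n - B.bound + p, l) := by
      intro l _
      rw [cTerm]
      have : n - (n - B.bound + (p : ℤ)) + l = B.bound - p + l := by ring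
      rw [this]
    rw [Finset.sum_congr rfl he]
    apply Finset.sum_subset (Finset.range_subset_range.mpr (by have := Finset.mem_range.mp hp; omega))
    intro l _ hl
    simp only [Finset.mem_range, not_lt] at hl
    apply cTerm_eq_zero
    push_neg
    intro _
    simp only
    omega
  rw [pdoCompCoeff, Finset.sum_congr rfl step1]
  rw [← Finset.sum_product']
  set T0 : Finset (ℤ × ℕ) := (Finset.range P ×ˢ Finset.range P).image
    (fun pl => ((n - B.bound + pl.1 : ℤ), pl.2)) with hT0
  have himg : ∑ q ∈ T0, cTerm D A B n q
      = ∑ pl ∈ Finset.range P ×ˢ Finset.range P, cTerm D A B n ((n - B.bound + pl.1 : ℤ), pl.2) := by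
    apply Finset.sum_image
    intro x _ y _ hxy
    rw [Prod.mk.injEq] at hxy
    obtain ⟨h1, h2⟩ := hxy
    have : x.1 = y.1 := by omega
    exact Prod.ext this h2
  rw [← himg]
  apply sum_eq_sum_of_vanish
  intro q hq
  by_cases hz : q.1 ≤ A.bound ∧ (q.2 : ℤ) ≤ q.1 + B.bound - n
  · exfalso
    have hmem2 : q ∈ T := hT q hz.1 hz.2
    have hmem1 : q ∈ T0 := by
      rw [hT0, Finset.mem_image]
      refine ⟨((q.1 - (n - B.bound)).toNat, q.2), ?_, ?_⟩
      · rw [Finset.mem_product, Finset.mem_range, Finset.mem_range]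
        constructor <;> omega
      · refine Prod.ext ?_ rfl
        simp only
        omega
    rcases hq with hq | hq
    · exact hq hmem1
    · exact hq hmem2
  · exact cTerm_eq_zero hz

lemma pdoCompCoeff_eq' (D : Derivation ℚ R R) (A B : PDO R) (n : ℤ) (a b : ℤ) (N' : ℕ)
    (ha : a ≤ n - B.bound) (hb : A.bound ≤ b) (hN : A.bound + B.bound - n < N') :
    pdoCompCoeff D A B n = ∑ k ∈ Finset.Icc a b, ∑ l ∈ Finset.range N',
      A.coeff k * (genBinom k l • (⇑D)^[l] (B.coeff (n - k + l))) := by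
  rw [pdoCompCoeff_eq D A B n (Finset.Icc a b ×ˢ Finset.range N')
    (by
      intro q h1 h2
      rw [Finset.mem_product, Finset.mem_Icc, Finset.mem_range]
      refine ⟨⟨by omega, by omega⟩, by omega⟩)]
  rw [Finset.sum_product]
  rfl

end CompLemmas

/-- The composition of pseudo-differential operators defined by the
generalized Leibniz rule `∂ₓ^k ∘ f = Σ_{l ≥ 0} (k(k−1)⋯(k−l+1)/l!)(∂^l f) ∂ₓ^{k−l}`,
extended bilinearly and continuously, is associative (as an operation on the
coefficient families). -/
theorem pdoComp_assoc (D : Derivation ℚ R R) (A B C : PDO R) :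
    (pdoComp D (pdoComp D A B) C).coeff = (pdoComp D A (pdoComp D B C)).coeff := by
  funext n
  show pdoCompCoeff D (pdoComp D A B) C n = pdoCompCoeff D A (pdoComp D B C) n
  have hL1 : pdoCompCoeff D (pdoComp D A B) C n
      = ∑ m ∈ Finset.Icc (n - C.bound) (A.bound + B.bound), ∑ l2 ∈ Finset.range (A.bound + B.bound + C.bound + 1 - n).toNat,
          pdoCompCoeff D A B m * (genBinom m l2 • (⇑D)^[l2] (C.coeff (n - m + ↑l2))) :=
    pdoCompCoeff_eq' D (pdoComp D A B) C n (n - C.bound) (A.bound + B.bound) (A.bound + B.bound + C.bound + 1 - n).toNat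
      (le_of_eq rfl) (le_of_eq rfl)
      ((by omega : A.bound + B.bound + C.bound - n < ((A.bound + B.bound + C.bound + 1 - n).toNat : ℤ)))
  have hL2 : ∀ m ∈ Finset.Icc (n - C.bound) (A.bound + B.bound), pdoCompCoeff D A B m
      = ∑ k ∈ Finset.Icc (n - B.bound - C.bound) A.bound, ∑ l1 ∈ Finset.range (A.bound + B.bound + C.bound + 1 - n).toNat,
          A.coeff k * (genBinom k l1 • (⇑D)^[l1] (B.coeff (m - k + ↑l1))) := by
    intro m hm
    rw [Finset.mem_Icc] at hm
    exact pdoCompCoeff_eq' D A B m (n - B.bound - C.bound) A.bound (A.bound + B.bound + C.bound + 1 - n).toNat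
      (by omega) le_rfl (by omega)
  have smul_arrange : ∀ (q1 q2 : ℚ) (a u v : R),
      (a * (q1 • u)) * (q2 • v) = (q1 * q2) • (a * (u * v)) := by
    intro q1 q2 a u v
    simp only [mul_smul_comm, smul_mul_assoc, smul_smul, mul_assoc]
    congr 1
    ring
  have hL3 : pdoCompCoeff D (pdoComp D A B) C n = ∑ m ∈ Finset.Icc (n - C.bound) (A.bound + B.bound), ∑ l2 ∈ Finset.range (A.bound + B.bound + C.bound + 1 - n).toNat, ∑ k ∈ Finset.Icc (n - B.bound - C.bound) A.bound, ∑ l1 ∈ Finset.range (A.bound + B.bound + C.bound + 1 - n).toNat, (genBinom k l1 * genBinom m l2) • (A.coeff k * ((⇑D)^[l1] (B.coeff (m - k + ↑l1)) * (⇑D)^[l2] (C.coeff (n - m + ↑l2)))) := by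
    rw [hL1]
    refine Finset.sum_congr rfl fun m hm => Finset.sum_congr rfl fun l2 _ => ?_
    rw [hL2 m hm, Finset.sum_mul]
    refine Finset.sum_congr rfl fun k _ => ?_
    rw [Finset.sum_mul]
    refine Finset.sum_congr rfl fun l1 _ => ?_
    exact smul_arrange _ _ _ _ _
  have hL4 : ∑ m ∈ Finset.Icc (n - C.bound) (A.bound + B.bound), ∑ l2 ∈ Finset.range (A.bound + B.bound + C.bound + 1 - n).toNat, ∑ k ∈ Finset.Icc (n - B.bound - C.bound) A.bound, ∑ l1 ∈ Finset.range (A.bound + B.bound + C.bound + 1 - n).toNat, (genBinom k l1 * genBinom m l2) • (A.coeff k * ((⇑D)^[l1] (B.coeff (m - k + ↑l1)) * (⇑D)^[l2] (C.coeff (n - m + ↑l2))))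
      = ∑ k ∈ Finset.Icc (n - B.bound - C.bound) A.bound, ∑ l1 ∈ Finset.range (A.bound + B.bound + C.bound + 1 - n).toNat, ∑ l2 ∈ Finset.range (A.bound + B.bound + C.bound + 1 - n).toNat, ∑ m ∈ Finset.Icc (n - C.bound) (A.bound + B.bound), (genBinom k l1 * genBinom m l2) • (A.coeff k * ((⇑D)^[l1] (B.coeff (m - k + ↑l1)) * (⇑D)^[l2] (C.coeff (n - m + ↑l2)))) := by
    calc ∑ m ∈ Finset.Icc (n - C.bound) (A.bound + B.bound), ∑ l2 ∈ Finset.range (A.bound + B.bound + C.bound + 1 - n).toNat, ∑ k ∈ Finset.Icc (n - B.bound - C.bound) A.bound, ∑ l1 ∈ Finset.range (A.bound + B.bound + C.bound + 1 - n).toNat, (genBinom k l1 * genBinom m l2) • (A.coeff k * ((⇑D)^[l1] (B.coeff (m - k + ↑l1)) * (⇑D)^[l2] (C.coeff (n - m + ↑l2)))) 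
      _ = ∑ m ∈ Finset.Icc (n - C.bound) (A.bound + B.bound), ∑ k ∈ Finset.Icc (n - B.bound - C.bound) A.bound, ∑ l2 ∈ Finset.range (A.bound + B.bound + C.bound + 1 - n).toNat, ∑ l1 ∈ Finset.range (A.bound + B.bound + C.bound + 1 - n).toNat, (genBinom k l1 * genBinom m l2) • (A.coeff k * ((⇑D)^[l1] (B.coeff (m - k + ↑l1)) * (⇑D)^[l2] (C.coeff (n - m + ↑l2)))) := Finset.sum_congr rfl fun _ _ => (Finset.sum_comm)
      _ = ∑ k ∈ Finset.Icc (n - B.bound - C.bound) A.bound, ∑ m ∈ Finset.Icc (n - C.bound) (A.bound + B.bound), ∑ l2 ∈ Finset.range (A.bound + B.bound + C.bound + 1 - n).toNat, ∑ l1 ∈ Finset.range (A.bound + B.bound + C.bound + 1 - n).toNat, (genBinom k l1 * genBinom m l2) • (A.coeff k * ((⇑D)^[l1] (B.coeff (m - k + ↑l1)) * (⇑D)^[l2] (C.coeff (n - m + ↑l2)))) := Finset.sum_comm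
      _ = ∑ k ∈ Finset.Icc (n - B.bound - C.bound) A.bound, ∑ l2 ∈ Finset.range (A.bound + B.bound + C.bound + 1 - n).toNat, ∑ m ∈ Finset.Icc (n - C.bound) (A.bound + B.bound), ∑ l1 ∈ Finset.range (A.bound + B.bound + C.bound + 1 - n).toNat, (genBinom k l1 * genBinom m l2) • (A.coeff k * ((⇑D)^[l1] (B.coeff (m - k + ↑l1)) * (⇑D)^[l2] (C.coeff (n - m + ↑l2)))) := Finset.sum_congr rfl fun _ _ => (Finset.sum_comm)
      _ = ∑ k ∈ Finset.Icc (n - B.bound - C.bound) A.bound, ∑ l2 ∈ Finset.range (A.bound + B.bound + C.bound + 1 - n).toNat, ∑ l1 ∈ Finset.range (A.bound + B.bound + C.bound + 1 - n).toNat, ∑ m ∈ Finset.Icc (n - C.bound) (A.bound + B.bound), (genBinom k l1 * genBinom m l2) • (A.coeff k * ((⇑D)^[l1] (B.coeff (m - k + ↑l1)) * (⇑D)^[l2] (C.coeff (n - m + ↑l2)))) := Finset.sum_congr rfl fun _ _ => (Finset.sum_congr rfl fun _ _ => (Finset.sum_comm))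
      _ = ∑ k ∈ Finset.Icc (n - B.bound - C.bound) A.bound, ∑ l1 ∈ Finset.range (A.bound + B.bound + C.bound + 1 - n).toNat, ∑ l2 ∈ Finset.range (A.bound + B.bound + C.bound + 1 - n).toNat, ∑ m ∈ Finset.Icc (n - C.bound) (A.bound + B.bound), (genBinom k l1 * genBinom m l2) • (A.coeff k * ((⇑D)^[l1] (B.coeff (m - k + ↑l1)) * (⇑D)^[l2] (C.coeff (n - m + ↑l2)))) := Finset.sum_congr rfl fun _ _ => (Finset.sum_comm)
  have hL5 : ∑ k ∈ Finset.Icc (n - B.bound - C.bound) A.bound, ∑ l1 ∈ Finset.range (A.bound + B.bound + C.bound + 1 - n).toNat, ∑ l2 ∈ Finset.range (A.bound + B.bound + C.bound + 1 - n).toNat, ∑ m ∈ Finset.Icc (n - C.bound) (A.bound + B.bound), (genBinom k l1 * genBinom m l2) • (A.coeff k * ((⇑D)^[l1] (B.coeff (m - k + ↑l1)) * (⇑D)^[l2] (C.coeff (n - m + ↑l2)))) = ∑ k ∈ Finset.Icc (n - B.bound - C.bound) A.bound, ∑ l1 ∈ Finset.range (A.bound + B.bound + C.bound + 1 - n).toNat,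 ∑ l2 ∈ Finset.range (A.bound + B.bound + C.bound + 1 - n).toNat, ∑ j ∈ Finset.Icc (n - A.bound - C.bound) B.bound, (genBinom k l1 * genBinom (k - ↑l1 + j) l2) • (A.coeff k * ((⇑D)^[l1] (B.coeff j) * (⇑D)^[l2] (C.coeff (n - k + ↑l1 - j + ↑l2)))) := by
    refine Finset.sum_congr rfl fun k hk => Finset.sum_congr rfl fun l1 _ => Finset.sum_congr rfl fun l2 _ => ?_
    rw [Finset.mem_Icc] at hk
    rw [← sum_Icc_shift (fun m => (genBinom k l1 * genBinom m l2) • (A.coeff k * ((⇑D)^[l1] (B.coeff (m - k + ↑l1)) * (⇑D)^[l2] (C.coeff (n - m + ↑l2))))) (n - C.bound) (A.bound + B.bound) (k - ↑l1)]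
    have hcongr : ∀ j ∈ Finset.Icc (n - C.bound - (k - ↑l1)) (A.bound + B.bound - (k - ↑l1)),
        (genBinom k l1 * genBinom (k - ↑l1 + j) l2) • (A.coeff k * ((⇑D)^[l1] (B.coeff ((k - ↑l1 + j) - k + ↑l1)) * (⇑D)^[l2] (C.coeff (n - (k - ↑l1 + j) + ↑l2))))
          = (genBinom k l1 * genBinom (k - ↑l1 + j) l2) • (A.coeff k * ((⇑D)^[l1] (B.coeff j) * (⇑D)^[l2] (C.coeff (n - k + ↑l1 - j + ↑l2)))) := by
      intro j _
      have e1 : k - ↑l1 + j - k + ↑l1 = j := by ring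
      have e2 : n - (k - ↑l1 + j) + ↑l2 = n - k + ↑l1 - j + ↑l2 := by ring
      rw [e1, e2]
    rw [Finset.sum_congr rfl hcongr]
    apply sum_eq_sum_of_vanish
    intro j hj
    by_cases hz : j ≤ B.bound ∧ n - k + ↑l1 - j + ↑l2 ≤ C.bound
    · exfalso
      simp only [Finset.mem_Icc, not_and, not_le] at hj
      rcases hj with hj | hj <;> omega
    · rcases not_and_or.mp hz with hz | hz
      · rw [B.coeff_eq_zero j (by omega), iter_zero, zero_mul, mul_zero, smul_zero]
      · rw [C.coeff_eq_zero _ (by omega), iter_zero, mul_zero, mul_zero, smul_zero]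
  have hL6 : ∑ k ∈ Finset.Icc (n - B.bound - C.bound) A.bound, ∑ l1 ∈ Finset.range (A.bound + B.bound + C.bound + 1 - n).toNat, ∑ l2 ∈ Finset.range (A.bound + B.bound + C.bound + 1 - n).toNat, ∑ j ∈ Finset.Icc (n - A.bound - C.bound) B.bound, (genBinom k l1 * genBinom (k - ↑l1 + j) l2) • (A.coeff k * ((⇑D)^[l1] (B.coeff j) * (⇑D)^[l2] (C.coeff (n - k + ↑l1 - j + ↑l2)))) = ∑ k ∈ Finset.Icc (n - B.bound - C.bound) A.bound, ∑ j ∈ Finset.Icc (n - A.bound - C.bound) B.bound, ∑ l1 ∈ Finset.range (A.bound + B.bound + C.bound + 1 - n).toNat, ∑ l2 ∈ Finset.range (A.bound + B.bound + C.bound + 1 - n).toNat, (genBinom k l1 * genBinom (k - ↑l1 + j) l2) • (A.coeff k * ((⇑D)^[l1] (B.coeff j) * (⇑D)^[l2] (C.coeff (n - k + ↑l1 - j + ↑l2)))) := by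
    calc ∑ k ∈ Finset.Icc (n - B.bound - C.bound) A.bound, ∑ l1 ∈ Finset.range (A.bound + B.bound + C.bound + 1 - n).toNat, ∑ l2 ∈ Finset.range (A.bound + B.bound + C.bound + 1 - n).toNat, ∑ j ∈ Finset.Icc (n - A.bound - C.bound) B.bound, (genBinom k l1 * genBinom (k - ↑l1 + j) l2) • (A.coeff k * ((⇑D)^[l1] (B.coeff j) * (⇑D)^[l2] (C.coeff (n - k + ↑l1 - j + ↑l2)))) 
      _ = ∑ k ∈ Finset.Icc (n - B.bound - C.bound) A.bound, ∑ l1 ∈ Finset.range (A.bound + B.bound + C.bound + 1 - n).toNat, ∑ j ∈ Finset.Icc (n - A.bound - C.bound) B.bound, ∑ l2 ∈ Finset.range (A.bound + B.bound + C.bound + 1 - n).toNat, (genBinom k l1 * genBinom (k - ↑l1 + j) l2) • (A.coeff k * ((⇑D)^[l1] (B.coeff j) * (⇑D)^[l2] (C.coeff (n - k + ↑l1 - j + ↑l2)))) := Finset.sum_congr rfl fun _ _ => (Finset.sum_congr rfl fun _ _ => (Finset.sum_comm))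
      _ = ∑ k ∈ Finset.Icc (n - B.bound - C.bound) A.bound, ∑ j ∈ Finset.Icc (n - A.bound - C.bound) B.bound, ∑ l1 ∈ Finset.range (A.bound + B.bound + C.bound + 1 - n).toNat, ∑ l2 ∈ Finset.range (A.bound + B.bound + C.bound + 1 - n).toNat, (genBinom k l1 * genBinom (k - ↑l1 + j) l2) • (A.coeff k * ((⇑D)^[l1] (B.coeff j) * (⇑D)^[l2] (C.coeff (n - k + ↑l1 - j + ↑l2)))) := Finset.sum_congr rfl fun _ _ => (Finset.sum_comm)
  have hR1 : pdoCompCoeff D A (pdoComp D B C) n = ∑ k ∈ Finset.Icc (n - B.bound - C.bound) A.bound, ∑ l ∈ Finset.range (A.bound + B.bound + C.bound + 1 - n).toNat, A.coeff k * (genBinom k l • (⇑D)^[l] (pdoCompCoeff D B C (n - k + ↑l))) :=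
    pdoCompCoeff_eq' D A (pdoComp D B C) n (n - B.bound - C.bound) A.bound (A.bound + B.bound + C.bound + 1 - n).toNat
      ((by omega : n - B.bound - C.bound ≤ n - (B.bound + C.bound))) le_rfl
      ((by omega : A.bound + (B.bound + C.bound) - n < ((A.bound + B.bound + C.bound + 1 - n).toNat : ℤ)))
  have hR2 : ∑ k ∈ Finset.Icc (n - B.bound - C.bound) A.bound, ∑ l ∈ Finset.range (A.bound + B.bound + C.bound + 1 - n).toNat, A.coeff k * (genBinom k l • (⇑D)^[l] (pdoCompCoeff D B C (n - k + ↑l))) = ∑ k ∈ Finset.Icc (n - B.bound - C.bound) A.bound, ∑ l ∈ Finset.range (A.bound + B.bound + C.bound + 1 - n).toNat, A.coeff k * (genBinom k l • (⇑D)^[l] (∑ j ∈ Finset.Icc (n - A.bound - C.bound) B.bound, ∑ l3 ∈ Finset.range (A.bound + B.bound + C.bound + 1 - n).toNat, B.coeff j * (genBinom j l3 • (⇑D)^[l3] (C.coeff (n - k + ↑l - j + ↑l3))))) := by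
    refine Finset.sum_congr rfl fun k hk => Finset.sum_congr rfl fun l _ => ?_
    rw [Finset.mem_Icc] at hk
    rw [pdoCompCoeff_eq' D B C (n - k + ↑l) (n - A.bound - C.bound) B.bound (A.bound + B.bound + C.bound + 1 - n).toNat
      (by omega) le_rfl (by omega)]
  have hR3 : ∑ k ∈ Finset.Icc (n - B.bound - C.bound) A.bound, ∑ l ∈ Finset.range (A.bound + B.bound + C.bound + 1 - n).toNat, A.coeff k * (genBinom k l • (⇑D)^[l] (∑ j ∈ Finset.Icc (n - A.bound - C.bound) B.bound, ∑ l3 ∈ Finset.range (A.bound + B.bound + C.bound + 1 - n).toNat, B.coeff j * (genBinom j l3 • (⇑D)^[l3] (C.coeff (n - k + ↑l - j + ↑l3))))) = ∑ k ∈ Finset.Icc (n - B.bound - C.bound) A.bound, ∑ l ∈ Finset.range (A.bound + B.bound + C.bound + 1 - n).toNat, ∑ j ∈ Finset.Icc (n - A.bound - C.bound) B.bound, ∑ l3 ∈ Finset.range (A.bound + B.bound + C.bound + 1 - n).toNat, ∑ s ∈ Finset.range (l + 1), (genBinom k l * (l.choose s : ℚ) * genBinom j l3) • (A.coeff k * ((⇑D)^[s]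 (B.coeff j) * (⇑D)^[l3 + (l - s)] (C.coeff (n - k + ↑s - j + ↑(l3 + (l - s)))))) := by
    refine Finset.sum_congr rfl fun k _ => Finset.sum_congr rfl fun l _ => ?_
    rw [iter_sum, Finset.smul_sum, Finset.mul_sum]
    refine Finset.sum_congr rfl fun j _ => ?_
    rw [iter_sum, Finset.smul_sum, Finset.mul_sum]
    refine Finset.sum_congr rfl fun l3 _ => ?_
    have hinner : B.coeff j * (genBinom j l3 • (⇑D)^[l3] (C.coeff (n - k + ↑l - j + ↑l3)))
        = genBinom j l3 • (B.coeff j * (⇑D)^[l3] (C.coeff (n - k + ↑l - j + ↑l3))) :=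
      mul_smul_comm _ _ _
    rw [hinner, iter_smul, iter_leibniz]
    rw [Finset.smul_sum, Finset.smul_sum, Finset.mul_sum]
    refine Finset.sum_congr rfl fun s hs => ?_
    rw [← Function.iterate_add_apply]
    have hexp : l - s + l3 = l3 + (l - s) := Nat.add_comm _ _
    have hidx : n - k + ↑l - j + ↑l3 = n - k + ↑s - j + ↑(l3 + (l - s)) := by
      have := Finset.mem_range.mp hs
      omega
    rw [hexp, hidx]
    simp only [smul_smul, mul_smul_comm]
    congr 1
    ring
  have hR4 : ∑ k ∈ Finset.Icc (n - B.bound - C.bound) A.bound, ∑ l ∈ Finset.range (A.bound + B.bound + C.bound + 1 - n).toNat, ∑ j ∈ Finset.Icc (n - A.bound - C.bound) B.bound, ∑ l3 ∈ Finset.range (A.bound + B.bound + C.bound + 1 - n).toNat, ∑ s ∈ Finset.range (l + 1), (genBinom k l * (l.choose s : ℚ) * genBinom j l3) • (A.coeff k * ((⇑D)^[s] (B.coeff j) * (⇑D)^[l3 + (l - s)] (C.coeff (n - k + ↑s - j + ↑(l3 + (l - s)))))) = ∑ k ∈ Finset.Icc (n - B.bound - C.bound) A.bound, ∑ j ∈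 Finset.Icc (n - A.bound - C.bound) B.bound, ∑ l ∈ Finset.range (A.bound + B.bound + C.bound + 1 - n).toNat, ∑ s ∈ Finset.range (l + 1), ∑ l3 ∈ Finset.range (A.bound + B.bound + C.bound + 1 - n).toNat, (genBinom k l * (l.choose s : ℚ) * genBinom j l3) • (A.coeff k * ((⇑D)^[s] (B.coeff j) * (⇑D)^[l3 + (l - s)] (C.coeff (n - k + ↑s - j + ↑(l3 + (l - s)))))) := by
    calc ∑ k ∈ Finset.Icc (n - B.bound - C.bound) A.bound, ∑ l ∈ Finset.range (A.bound + B.bound + C.bound + 1 - n).toNat, ∑ j ∈ Finset.Icc (n - A.bound - C.bound) B.bound, ∑ l3 ∈ Finset.range (A.bound + B.bound + C.bound + 1 - n).toNat, ∑ s ∈ Finset.range (l + 1), (genBinom k l * (l.choose s : ℚ) * genBinom j l3) • (A.coeff k * ((⇑D)^[s] (B.coeff j) * (⇑D)^[l3 + (l - s)] (C.coeff (n - k + ↑s - j + ↑(l3 + (l - s)))))) 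
      _ = ∑ k ∈ Finset.Icc (n - B.bound - C.bound) A.bound, ∑ l ∈ Finset.range (A.bound + B.bound + C.bound + 1 - n).toNat, ∑ j ∈ Finset.Icc (n - A.bound - C.bound) B.bound, ∑ s ∈ Finset.range (l + 1), ∑ l3 ∈ Finset.range (A.bound + B.bound + C.bound + 1 - n).toNat, (genBinom k l * (l.choose s : ℚ) * genBinom j l3) • (A.coeff k * ((⇑D)^[s] (B.coeff j) * (⇑D)^[l3 + (l - s)] (C.coeff (n - k + ↑s - j + ↑(l3 + (l - s)))))) := Finset.sum_congr rfl fun _ _ => (Finset.sum_congr rfl fun _ _ => (Finset.sum_congr rfl fun _ _ => (Finset.sum_comm)))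
      _ = ∑ k ∈ Finset.Icc (n - B.bound - C.bound) A.bound, ∑ j ∈ Finset.Icc (n - A.bound - C.bound) B.bound, ∑ l ∈ Finset.range (A.bound + B.bound + C.bound + 1 - n).toNat, ∑ s ∈ Finset.range (l + 1), ∑ l3 ∈ Finset.range (A.bound + B.bound + C.bound + 1 - n).toNat, (genBinom k l * (l.choose s : ℚ) * genBinom j l3) • (A.coeff k * ((⇑D)^[s] (B.coeff j) * (⇑D)^[l3 + (l - s)] (C.coeff (n - k + ↑s - j + ↑(l3 + (l - s)))))) := Finset.sum_congr rfl fun _ _ => (Finset.sum_comm)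
  have hcore : ∑ k ∈ Finset.Icc (n - B.bound - C.bound) A.bound, ∑ j ∈ Finset.Icc (n - A.bound - C.bound) B.bound, ∑ l ∈ Finset.range (A.bound + B.bound + C.bound + 1 - n).toNat, ∑ s ∈ Finset.range (l + 1), ∑ l3 ∈ Finset.range (A.bound + B.bound + C.bound + 1 - n).toNat, (genBinom k l * (l.choose s : ℚ) * genBinom j l3) • (A.coeff k * ((⇑D)^[s] (B.coeff j) * (⇑D)^[l3 + (l - s)] (C.coeff (n - k + ↑s - j + ↑(l3 + (l - s)))))) = ∑ k ∈ Finset.Icc (n - B.bound - C.bound) A.bound, ∑ j ∈ Finset.Icc (n - A.bound - C.bound) B.bound, ∑ l1 ∈ Finset.range (A.bound + B.bound + C.bound + 1 - n).toNat, ∑ l2 ∈ Finset.range (A.bound + B.bound + C.bound + 1 - n).toNat, (genBinom k l1 * genBinom (k - ↑l1 + j) l2) • (A.coeff k * ((⇑D)^[l1] (B.coeff j) * (⇑D)^[l2] (C.coeff (n - k + ↑l1 - j + ↑l2)))) := by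
    refine Finset.sum_congr rfl fun k hk => Finset.sum_congr rfl fun j hj => ?_
    rw [Finset.mem_Icc] at hk hj
    exact core_identity (A.bound + B.bound + C.bound + 1 - n).toNat k j
      (fun l1 l2 => A.coeff k * ((⇑D)^[l1] (B.coeff j) * (⇑D)^[l2] (C.coeff (n - k + ↑l1 - j + ↑l2))))
      (by
        intro l1 l2 h12
        have hc0 : C.coeff (n - k + ↑l1 - j + ↑l2) = 0 := C.coeff_eq_zero _ (by omega)
        simp only [hc0, iter_zero, mul_zero])
  rw [hL3, hL4, hL5, hL6, hR1, hR2, hR3, hR4, hcore]
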